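/- Let t ≥ 4 be even, and let D^0, D^1, …, D^{2t−1} ∈ {1,−1}^t be the vertex sequence of a symmetric cycle in the hypercube graph H(t,2), i.e., consecutive vertices (indices mod 2t) differ in exactly one coordinate and D^{k+t} = −D^k for 0 ≤ k ≤ t−1. Define the subtopes S^k := (1/2)(D^k + D^{k+1}) for 0 ≤ k ≤ t−1. Then (S^0, S^1, …, S^{t−1}) is a basis of ℝ^t. -/
import Mathlib

theorem stmt_3 (t : ℕ) (ht : 4 ≤ t) (hev : Even t)
    (D : ℕ → Fin t → ℝ)
    -- every vertex of the cycle lies in {1,-1}^t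
    (hpm : ∀ k < 2 * t, ∀ i, D k i = 1 ∨ D k i = -1)
    -- the 2t vertices are pairwise distinct
    (hinj : ∀ k < 2 * t, ∀ l < 2 * t, D k = D l → k = l)
    -- consecutive vertices (cyclically) differ in exactly one coordinate
    (hadj : ∀ k < 2 * t,
      (Finset.univ.filter fun i => D k i ≠ D ((k + 1) % (2 * t)) i).card = 1)
    -- antipodal symmetry: D^{k+t} = -D^k
    (hsym : ∀ k < t, ∀ i, D (k + t) i = -(D k i)) :
    -- the subtopes S^k := (1/2)(D^k + D^{k+1}), 0 ≤ k ≤ t-1, form a basis of ℝ^t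
    LinearIndependent ℝ (fun k : Fin t => fun i => (D (k : ℕ) i + D ((k : ℕ) + 1) i) / 2) ∧
    Submodule.span ℝ
      (Set.range (fun k : Fin t => fun i => (D (k : ℕ) i + D ((k : ℕ) + 1) i) / 2)) = ⊤ := by
  classical
  have ht0 : 0 < t := by omega
  -- each step k < t flips exactly one coordinate
  have hone : ∀ k, k < t → (Finset.univ.filter fun i => D k i ≠ D (k + 1) i).card = 1 := by
    intro k hk
    have h := hadj k (by omega)
    rwa [Nat.mod_eq_of_lt (by omega)] at h
  -- constancy on flip-free intervals
  have hconst : ∀ i : Fin t, ∀ a b : ℕ, a ≤ b →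
      (∀ m, a ≤ m → m < b → D m i = D (m + 1) i) → D a i = D b i := by
    intro i a b hab hflat
    induction b with
    | zero =>
      have : a = 0 := Nat.le_zero.mp hab
      rw [this]
    | succ b ih =>
      rcases Nat.lt_or_ge a (b + 1) with h | h
      · have := ih (by omega) (fun m hm1 hm2 => hflat m hm1 (by omega))
        rw [this, hflat b (by omega) (by omega)]
      · have : a = b + 1 := by omega
        rw [this]
  have hD0 : ∀ k, k < 2 * t → ∀ i, D k i ≠ 0 := by
    intro k hk i
    rcases hpm k hk i with h | h <;> rw [h] <;> norm_num
  have hDt : ∀ i : Fin t, D t i = -(D 0 i) := by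
    intro i
    have := hsym 0 ht0 i
    simpa using this
  -- each coordinate flips at least once on [0, t)
  have hNpos : ∀ i : Fin t,
      1 ≤ ((Finset.range t).filter fun k => D k i ≠ D (k + 1) i).card := by
    intro i
    by_contra h
    have hzero : ((Finset.range t).filter fun k => D k i ≠ D (k + 1) i).card = 0 := by omega
    rw [Finset.card_eq_zero] at hzero
    have hempty : ∀ m, m < t → D m i = D (m + 1) i := by
      intro m hm
      by_contra hne
      have hmem : m ∈ (Finset.range t).filter fun k => D k i ≠ D (k + 1) i := by
        simp [Finset.mem_filter, hm, hne]
      rw [hzero] at hmem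
      exact absurd hmem (Finset.notMem_empty m)
    have := hconst i 0 t (by omega) (fun m _ hm => hempty m hm)
    rw [hDt i] at this
    have h0 : D 0 i = 0 := by linarith
    exact hD0 0 (by omega) i h0
  -- total number of flips is t
  have hsumN : ∑ i : Fin t, ((Finset.range t).filter fun k => D k i ≠ D (k + 1) i).card = t := by
    have h1 : ∑ i : Fin t, ((Finset.range t).filter fun k => D k i ≠ D (k + 1) i).card
        = ∑ k ∈ Finset.range t, (Finset.univ.filter fun i : Fin t => D k i ≠ D (k + 1) i).card := by
      simp only [Finset.card_filter]
      rw [Finset.sum_comm]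
    rw [h1, Finset.sum_congr rfl fun k hk => hone k (Finset.mem_range.mp hk)]
    simp
  -- hence each coordinate flips exactly once
  have hN1 : ∀ i : Fin t, ((Finset.range t).filter fun k => D k i ≠ D (k + 1) i).card = 1 := by
    by_contra h
    push_neg at h
    obtain ⟨i, hi⟩ := h
    have hlt : ∑ _i : Fin t, 1 < ∑ i : Fin t, ((Finset.range t).filter fun k => D k i ≠ D (k + 1) i).card :=
      Finset.sum_lt_sum (fun j _ => hNpos j) ⟨i, Finset.mem_univ i, by have := hNpos i; omega⟩
    rw [hsumN] at hlt
    simp at hlt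
  -- for each step j, a coordinate flipped only at step j
  have hval : ∀ j, j < t → ∃ i : Fin t,
      (∀ k, k ≤ j → D k i = D 0 i) ∧ (∀ k, j < k → k ≤ t → D k i = -(D 0 i)) := by
    intro j hj
    obtain ⟨i, hi⟩ := Finset.card_eq_one.mp (hone j hj)
    have hji : D j i ≠ D (j + 1) i := by
      have : i ∈ Finset.univ.filter fun i : Fin t => D j i ≠ D (j + 1) i := by
        rw [hi]; exact Finset.mem_singleton_self i
      simpa using this
    have huniq : ∀ k, k < t → D k i ≠ D (k + 1) i → k = j := by
      intro k hk hkne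
      obtain ⟨a, ha⟩ := Finset.card_eq_one.mp (hN1 i)
      have hmemj : j ∈ (Finset.range t).filter fun k => D k i ≠ D (k + 1) i := by
        simp [hj, hji]
      have hmemk : k ∈ (Finset.range t).filter fun k => D k i ≠ D (k + 1) i := by
        simp [hk, hkne]
      rw [ha, Finset.mem_singleton] at hmemj hmemk
      omega
    have hle : ∀ k, k ≤ j → D k i = D 0 i := by
      intro k hk
      refine (hconst i 0 k (Nat.zero_le _) fun m hm1 hm2 => ?_).symm
      by_contra hmm
      have := huniq m (by omega) hmm
      omega
    have hDj1 : D (j + 1) i = -(D 0 i) := by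
      have hj' : D j i = D 0 i := hle j le_rfl
      rcases hpm j (by omega) i with h | h <;> rcases hpm (j + 1) (by omega) i with h' | h'
      · exact absurd (h.trans h'.symm) hji
      · rw [h', ← hj', h]
      · rw [h', ← hj', h]; norm_num
      · exact absurd (h.trans h'.symm) hji
    refine ⟨i, hle, ?_⟩
    intro k hk1 hk2
    have hstep : D (j + 1) i = D k i := by
      refine hconst i (j + 1) k (by omega) fun m hm1 hm2 => ?_
      by_contra hmm
      have := huniq m (by omega) hmm
      omega
    rw [← hstep, hDj1]
  choose I hIle hIgt using hval
  -- main linear independence computation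
  have main : ∀ g : Fin t → ℝ,
      (∑ k : Fin t, g k • (fun i => (D (k : ℕ) i + D ((k : ℕ) + 1) i) / 2)) = 0 →
      ∀ k, g k = 0 := by
    intro g hg
    set c : ℕ → ℝ := fun k => if h : k < t then g ⟨k, h⟩ else 0 with hc
    set A : ℕ → ℝ := fun n => ∑ k ∈ Finset.range n, c k with hA
    have key : ∀ j (hj : j < t), A j + A (j + 1) = A t := by
      intro j hj
      set i := I j hj with hi
      have hd0 : D 0 i ≠ 0 := hD0 0 (by omega) i
      have hgi : ∑ k : Fin t, g k * ((D (k : ℕ) i + D ((k : ℕ) + 1) i) / 2) = 0 := by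
        have := congrFun hg i
        simpa using this
      have hterm : ∀ k : Fin t, g k * ((D (k : ℕ) i + D ((k : ℕ) + 1) i) / 2)
          = D 0 i * (c (k : ℕ) * (if (k : ℕ) < j then 1 else if (k : ℕ) = j then 0 else -1)) := by
        intro k
        have hck : c (k : ℕ) = g k := by simp [hc, k.isLt]
        have hkt : (k : ℕ) < t := k.isLt
        rcases lt_trichotomy (k : ℕ) j with h | h | h
        · rw [hIle j hj k (by omega), hIle j hj ((k : ℕ) + 1) (by omega), hck, if_pos h]
          ring
        · rw [hIle j hj k (by omega), hIgt j hj ((k : ℕ) + 1) (by omega) (by omega),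
            hck, if_neg (by omega), if_pos h]
          ring
        · rw [hIgt j hj k h (by omega), hIgt j hj ((k : ℕ) + 1) (by omega) (by omega),
            hck, if_neg (by omega), if_neg (by omega)]
          ring
      have h2 : D 0 i * (∑ k : Fin t, c (k : ℕ) * (if (k : ℕ) < j then 1 else if (k : ℕ) = j then 0 else -1)) = 0 := by
        rw [Finset.mul_sum]
        calc ∑ k : Fin t, D 0 i * (c (k : ℕ) * (if (k : ℕ) < j then 1 else if (k : ℕ) = j then 0 else -1))
            = ∑ k : Fin t, g k * ((D (k : ℕ) i + D ((k : ℕ) + 1) i) / 2) :=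
              Finset.sum_congr rfl fun k _ => (hterm k).symm
          _ = 0 := hgi
      have h3 : (∑ k : Fin t, c (k : ℕ) * (if (k : ℕ) < j then 1 else if (k : ℕ) = j then 0 else -1)) = 0 :=
        by
        rcases mul_eq_zero.mp h2 with h | h
        · exact absurd h hd0
        · exact h
      rw [Fin.sum_univ_eq_sum_range (fun k => c k * (if k < j then 1 else if k = j then 0 else -1)) t] at h3
      have hsplit : ∑ k ∈ Finset.range t, c k * (if k < j then 1 else if k = j then 0 else -1)
          = A j + (A (j + 1) - A t) := by
        rw [← Finset.sum_range_add_sum_Ico _ (show j + 1 ≤ t by omega), Finset.sum_range_succ]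
        have e1 : ∑ k ∈ Finset.range j, c k * (if k < j then 1 else if k = j then 0 else -1)
            = A j := by
          rw [hA]
          refine Finset.sum_congr rfl fun k hk => ?_
          rw [if_pos (Finset.mem_range.mp hk)]
          ring
        have e2 : c j * (if j < j then (1:ℝ) else if j = j then 0 else -1) = 0 := by
          rw [if_neg (lt_irrefl j), if_pos rfl]
          ring
        have e3 : ∑ k ∈ Finset.Ico (j + 1) t, c k * (if k < j then 1 else if k = j then 0 else -1)
            = -(A t - A (j + 1)) := by
          have : ∑ k ∈ Finset.Ico (j + 1) t, c k * (if k < j then (1:ℝ) else if k = j then 0 else -1)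
              = ∑ k ∈ Finset.Ico (j + 1) t, -(c k) := by
            refine Finset.sum_congr rfl fun k hk => ?_
            have hk' := Finset.mem_Ico.mp hk
            rw [if_neg (by omega), if_neg (by omega)]
            ring
          rw [this, Finset.sum_neg_distrib]
          rw [Finset.sum_Ico_eq_sub _ (show j + 1 ≤ t by omega)]
        rw [e1, e2, e3]
        ring
      rw [hsplit] at h3
      linarith
    have hA0 : A 0 = 0 := by simp [hA]
    -- A(j+2) = A j for j+2 ≤ t
    have hAt : A t = 0 := by
      obtain ⟨m, hm⟩ := hev
      have heven : ∀ n, n + n ≤ t → A (n + n) = 0 := by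
        intro n
        induction n with
        | zero => intro _; simpa using hA0
        | succ n ih =>
          intro hle
          have h1 := key (n + n) (by omega)
          have h2 := key (n + n + 1) (by omega)
          have h0 := ih (by omega)
          have : A (n + 1 + (n + 1)) = A (n + n) := by
            have : n + 1 + (n + 1) = n + n + 1 + 1 := by omega
            rw [this]
            linarith
          rw [this, h0]
      have := heven m (by omega)
      rwa [show m + m = t by omega] at this
    have hAall : ∀ n, n ≤ t → A n = 0 := by
      intro n
      induction n with
      | zero => intro _; exact hA0
      | succ n ih =>
        intro hn
        have h1 := key n (by omega)
        have h2 := ih (by omega)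
        rw [hAt] at h1
        linarith
    intro k
    have hc1 : A ((k : ℕ) + 1) = A (k : ℕ) + c (k : ℕ) := by
      rw [hA]
      exact Finset.sum_range_succ _ _
    have h1 := hAall (k : ℕ) (by omega)
    have h2 := hAall ((k : ℕ) + 1) (by omega)
    have hck : c (k : ℕ) = g k := by simp [hc, k.isLt]
    rw [← hck]
    linarith
  have hli : LinearIndependent ℝ (fun k : Fin t => fun i => (D (k : ℕ) i + D ((k : ℕ) + 1) i) / 2) := by
    rw [Fintype.linearIndependent_iff]
    exact main
  refine ⟨hli, ?_⟩
  haveI : Nonempty (Fin t) := ⟨⟨0, ht0⟩⟩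
  have hcard : Fintype.card (Fin t) = Module.finrank ℝ (Fin t → ℝ) := by simp
  rw [← coe_basisOfLinearIndependentOfCardEqFinrank hli hcard]
  exact (basisOfLinearIndependentOfCardEqFinrank hli hcard).span_eq
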